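/- Let G be a countable abelian group with 2G infinite and [G : 2G] = ∞, and let Φ be any Følner sequence in G. Then there exists a set A ⊆ G with upper density 1 along Φ such that for every t ∈ G and every infinite B ⊆ G, t + B + B is not contained in A. -/

import Mathlib

open Filter Pointwise
open scoped Classical

/-- The doubling map `g ↦ g + g` as an additive homomorphism. -/
def doubleHom (G : Type*) [AddCommGroup G] : G →+ G where
  toFun g := g + g
  map_zero' := by simp
  map_add' := by intro a b; abel

/-- The subgroup `2G = {g + g : g ∈ G}`. -/
def twoG (G : Type*) [AddCommGroup G] : AddSubgroup G := (doubleHom G).range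

/-- A Følner sequence: finite sets with `|Φ_N ∩ (g + Φ_N)|/|Φ_N| → 1` for every `g`. -/
def IsFolner {G : Type*} [AddCommGroup G] (Φ : ℕ → Finset G) : Prop :=
  ∀ g : G, Tendsto
    (fun N => (((Φ N) ∩ (Φ N).image (fun x => g + x)).card : ℝ) / ((Φ N).card : ℝ))
    atTop (nhds 1)

section Aux

variable {G : Type*} [AddCommGroup G]

lemma aux_ncard_inter_filter (C : Set G) (s : Finset G) :
    (C ∩ (s : Set G)).ncard = (s.filter (fun x => x ∈ C)).card := by
  rw [← Set.ncard_coe_finset]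
  congr 1
  ext x
  simp [and_comm]

lemma aux_folner_diff {Φ : ℕ → Finset G} (hΦ : IsFolner Φ) (g : G) {ε : ℝ} (hε : 0 < ε) :
    ∀ᶠ N in atTop,
      ((Φ N).card : ℝ) - (((Φ N) ∩ (Φ N).image (fun x => g + x)).card : ℝ)
        ≤ ε * (Φ N).card := by
  filter_upwards [(hΦ g).eventually (eventually_gt_nhds (by linarith : (1:ℝ) - ε < 1))] with N hN
  by_cases hc : ((Φ N).card : ℝ) = 0
  · have h1 : ((Φ N) ∩ (Φ N).image (fun x => g + x)).card ≤ (Φ N).card :=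
      Finset.card_le_card (Finset.inter_subset_left)
    have h2 : (((Φ N) ∩ (Φ N).image (fun x => g + x)).card : ℝ) ≤ (Φ N).card := by
      exact_mod_cast h1
    rw [hc] at h2 ⊢
    have : (((Φ N) ∩ (Φ N).image (fun x => g + x)).card : ℝ) ≥ 0 := by positivity
    nlinarith
  · have hc' : (0:ℝ) < (Φ N).card := lt_of_le_of_ne (by positivity) (Ne.symm hc)
    rw [lt_div_iff₀ hc'] at hN
    nlinarith

/-- A coset of an infinite-index subgroup has small intersection with Følner sets. -/
lemma aux_coset_small {Φ : ℕ → Finset G} (hΦ : IsFolner Φ) (H : AddSubgroup G)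
    (hH : H.index = 0) (g : G) {ε : ℝ} (hε : 0 < ε) :
    ∀ᶠ N in atTop,
      (((Φ N).filter (fun x => x ∈ g +ᵥ (H : Set G))).card : ℝ) ≤ ε * (Φ N).card := by
  have hq : Infinite (G ⧸ H) := by
    have h0 : Nat.card (G ⧸ H) = 0 := hH
    rcases Nat.card_eq_zero.mp h0 with h | h
    · exact absurd (h.false (QuotientAddGroup.mk 0)) (fun h => h)
    · exact h
  obtain ⟨k, hk⟩ := exists_nat_ge (2 / ε)
  have hk2 : (2:ℝ) ≤ ε * k := by
    rw [div_le_iff₀ hε] at hk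
    linarith [hk]
  have hkpos : (0:ℝ) < k := by
    have : (0:ℝ) < 2 / ε := by positivity
    linarith
  set emb := Infinite.natEmbedding (G ⧸ H) with hemb
  set t : ℕ → G := fun i => Quotient.out (emb i) with ht
  have htmk : ∀ i, (QuotientAddGroup.mk (t i) : G ⧸ H) = emb i := fun i =>
    QuotientAddGroup.out_eq' (emb i)
  have htinj : ∀ i j, -(t j) + (t i) ∈ H → i = j := by
    intro i j hij
    apply emb.injective
    rw [← htmk i, ← htmk j]
    exact (QuotientAddGroup.eq ).mpr hij |>.symm
  filter_upwards [eventually_all.2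
    (fun i : Fin k => aux_folner_diff hΦ (t i) (half_pos hε))] with N hN
  set S : Finset G := (Φ N).filter (fun x => x ∈ g +ᵥ (H : Set G)) with hSdef
  show (S.card : ℝ) ≤ ε * (Φ N).card
  set F : ℕ → Finset G := fun i => (Φ N) ∩ (S.image (fun x => t i + x)) with hF
  -- each F i is large
  have hcard : ∀ i : Fin k, (S.card : ℝ) - (ε/2) * (Φ N).card ≤ ((F i).card : ℝ) := by
    intro i
    have himg : (S.image (fun x => t i + x)).card = S.card :=
      Finset.card_image_of_injective _ (add_right_injective _)
    have himgΦ : ((Φ N).image (fun x => t i + x)).card = (Φ N).card :=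
      Finset.card_image_of_injective _ (add_right_injective _)
    have hsub : S.image (fun x => t i + x) ⊆ (Φ N).image (fun x => t i + x) :=
      Finset.image_subset_image (Finset.filter_subset _ _)
    have h1 : (S.image (fun x => t i + x) ∩ Φ N).card
        + (S.image (fun x => t i + x) \ Φ N).card = S.card := by
      rw [Finset.card_inter_add_card_sdiff]; exact himg
    have h2 : ((Φ N).image (fun x => t i + x) ∩ Φ N).card
        + ((Φ N).image (fun x => t i + x) \ Φ N).card = (Φ N).card := by
      rw [Finset.card_inter_add_card_sdiff]; exact himgΦ
    have h3 : (S.image (fun x => t i + x) \ Φ N).card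
        ≤ ((Φ N).image (fun x => t i + x) \ Φ N).card :=
      Finset.card_le_card (Finset.sdiff_subset_sdiff hsub le_rfl)
    have h4 := hN i
    have h5 : ((Φ N) ∩ (Φ N).image (fun x => t i + x)).card
        = ((Φ N).image (fun x => t i + x) ∩ Φ N).card := by rw [Finset.inter_comm]
    have h6 : (F i).card = (S.image (fun x => t i + x) ∩ Φ N).card := by
      rw [hF]; rw [Finset.inter_comm]
    rw [h5] at h4
    rw [h6]
    have c1 : ((S.image (fun x => t i + x) ∩ Φ N).card : ℝ)
        + ((S.image (fun x => t i + x) \ Φ N).card : ℝ) = S.card := by exact_mod_cast h1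
    have c2 : (((Φ N).image (fun x => t i + x) ∩ Φ N).card : ℝ)
        + (((Φ N).image (fun x => t i + x) \ Φ N).card : ℝ) = (Φ N).card := by
      exact_mod_cast h2
    have c3 : ((S.image (fun x => t i + x) \ Φ N).card : ℝ)
        ≤ (((Φ N).image (fun x => t i + x) \ Φ N).card : ℝ) := by exact_mod_cast h3
    linarith
  -- the F i are pairwise disjoint
  have hdisj : ∀ i j : ℕ, i ≠ j → Disjoint (F i) (F j) := by
    intro i j hij
    rw [Finset.disjoint_left]
    intro x hxi hxj
    apply hij
    rw [hF] at hxi hxj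
    simp only [Finset.mem_inter, Finset.mem_image] at hxi hxj
    obtain ⟨-, s, hs, hxs⟩ := hxi
    obtain ⟨-, s', hs', hxs'⟩ := hxj
    rw [hSdef, Finset.mem_filter] at hs hs'
    rw [Set.mem_vadd_set_iff_neg_vadd_mem] at hs hs'
    simp only [vadd_eq_add] at hs hs'
    apply htinj
    have : -(t j) + (t i) = (-g + s') - (-g + s) := by
      have h1 : t i = x - s := by rw [← hxs]; abel
      have h2 : t j = x - s' := by rw [← hxs']; abel
      rw [h1, h2]; abel
    rw [this]
    exact sub_mem hs'.2 hs.2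
  -- sum bound
  have hsum : ∑ i ∈ Finset.range k, (F i).card ≤ (Φ N).card := by
    rw [← Finset.card_biUnion (fun i _ => fun j _ hij => hdisj i j hij)]
    apply Finset.card_le_card
    intro x hx
    simp only [Finset.mem_biUnion] at hx
    obtain ⟨i, -, hxi⟩ := hx
    rw [hF] at hxi
    exact (Finset.mem_inter.mp hxi).1
  have hsumR : ((k : ℝ)) * ((S.card : ℝ) - (ε/2) * (Φ N).card) ≤ (Φ N).card := by
    have h1 : ((k : ℝ)) * ((S.card : ℝ) - (ε/2) * (Φ N).card)
        ≤ ∑ i ∈ Finset.range k, ((F i).card : ℝ) := by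
      calc ((k : ℝ)) * ((S.card : ℝ) - (ε/2) * (Φ N).card)
          = ∑ _i ∈ Finset.range k, ((S.card : ℝ) - (ε/2) * (Φ N).card) := by
            rw [Finset.sum_const, Finset.card_range, nsmul_eq_mul]
        _ ≤ ∑ i ∈ Finset.range k, ((F i).card : ℝ) := by
            apply Finset.sum_le_sum
            intro i hi
            exact hcard ⟨i, Finset.mem_range.mp hi⟩
    have h2 : (∑ i ∈ Finset.range k, ((F i).card : ℝ)) ≤ ((Φ N).card : ℝ) := by
      rw [← Nat.cast_sum]
      exact_mod_cast hsum
    linarith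
  have hΦpos : (0:ℝ) ≤ (Φ N).card := by positivity
  nlinarith [hsumR, mul_le_mul_of_nonneg_right hk2 hΦpos]

/-- Finitely many cosets of infinite-index subgroups have small intersection. -/
lemma aux_union_small {Φ : ℕ → Finset G} (hΦ : IsFolner Φ) (m : ℕ)
    (Hs : Fin m → AddSubgroup G) (gs : Fin m → G) (hHs : ∀ i, (Hs i).index = 0)
    {ε : ℝ} (hε : 0 < ε) :
    ∀ᶠ N in atTop,
      (((⋃ i, (gs i +ᵥ (Hs i : Set G))) ∩ (Φ N : Set G)).ncard : ℝ) ≤ ε * (Φ N).card := by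
  rcases Nat.eq_zero_or_pos m with hm | hm
  · subst hm
    filter_upwards with N
    have : (⋃ i : Fin 0, (gs i +ᵥ (Hs i : Set G))) = ∅ := by
      simp
    rw [this]
    simp
    positivity
  · have hεm : 0 < ε / m := by positivity
    filter_upwards [eventually_all.2 (fun i : Fin m => aux_coset_small hΦ (Hs i) (hHs i) (gs i) hεm)]
      with N hN
    rw [aux_ncard_inter_filter]
    have hsub : (Φ N).filter (fun x => x ∈ ⋃ i, (gs i +ᵥ (Hs i : Set G)))
        ⊆ Finset.univ.biUnion (fun i : Fin m => (Φ N).filter (fun x => x ∈ gs i +ᵥ (Hs i : Set G))) := by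
      intro x hx
      rw [Finset.mem_filter] at hx
      obtain ⟨hx1, hx2⟩ := hx
      rw [Set.mem_iUnion] at hx2
      obtain ⟨i, hi⟩ := hx2
      rw [Finset.mem_biUnion]
      exact ⟨i, Finset.mem_univ i, Finset.mem_filter.mpr ⟨hx1, hi⟩⟩
    calc (((Φ N).filter (fun x => x ∈ ⋃ i, (gs i +ᵥ (Hs i : Set G)))).card : ℝ)
        ≤ ((Finset.univ.biUnion (fun i : Fin m =>
            (Φ N).filter (fun x => x ∈ gs i +ᵥ (Hs i : Set G)))).card : ℝ) := by
          exact_mod_cast Finset.card_le_card hsub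
      _ ≤ ∑ i : Fin m, (((Φ N).filter (fun x => x ∈ gs i +ᵥ (Hs i : Set G))).card : ℝ) := by
          rw [← Nat.cast_sum]
          exact_mod_cast Finset.card_biUnion_le
      _ ≤ ∑ _i : Fin m, (ε / m) * (Φ N).card := Finset.sum_le_sum (fun i _ => hN i)
      _ = m * ((ε / m) * (Φ N).card) := by rw [Finset.sum_const, Finset.card_univ,
          Fintype.card_fin, nsmul_eq_mul]
      _ ≤ ε * (Φ N).card := by
          have hm' : (0:ℝ) < m := by exact_mod_cast hm
          have h : (m:ℝ) * (ε / m) = ε := by field_simp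
          rw [← mul_assoc, h]

end Aux

theorem stmt15 (G : Type*) [AddCommGroup G] [Countable G]
    (h2inf : (twoG G : Set G).Infinite) (hindex : (twoG G).index = 0)
    (Φ : ℕ → Finset G) (hΦ : IsFolner Φ) :
    ∃ A : Set G,
      Filter.limsup (fun N => ((A ∩ (Φ N : Set G)).ncard : ℝ) / ((Φ N).card : ℝ))
        atTop = 1 ∧
      ∀ t : G, ∀ B : Set G, B.Infinite → ¬ (({t} : Set G) + B + B ⊆ A) := by
  haveI : Nonempty G := ⟨0⟩
  set K : AddSubgroup G := (doubleHom G).ker with hKdef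
  have hKindex : K.index = 0 := by
    have hequiv : G ⧸ K ≃+ (doubleHom G).range := QuotientAddGroup.quotientKerEquivRange _
    have : Nat.card (G ⧸ K) = Nat.card (doubleHom G).range := Nat.card_congr hequiv.toEquiv
    have hinf : Infinite (twoG G) := h2inf.to_subtype
    have : Nat.card (twoG G) = 0 := Nat.card_eq_zero_of_infinite
    unfold AddSubgroup.index
    rw [Nat.card_congr hequiv.toEquiv]
    exact this
  obtain ⟨e, he⟩ := exists_surjective_nat G
  -- the union of the first k+1 cosets of 2G and of K
  set Dset : ℕ → Set G := fun k =>
    (⋃ j : Fin (k+1), (e j +ᵥ (twoG G : Set G))) ∪ (⋃ j : Fin (k+1), (e j +ᵥ (K : Set G)))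
    with hDdef
  have hpos : ∀ᶠ N in atTop, 0 < (Φ N).card := by
    have h0 := hΦ 0
    filter_upwards [h0.eventually (eventually_gt_nhds (by norm_num : (1:ℝ)/2 < 1))] with N hN
    by_contra hc
    push_neg at hc
    have h0 : (Φ N) = ∅ := Finset.card_eq_zero.mp (Nat.le_zero.mp hc)
    rw [h0] at hN
    simp at hN
    norm_num at hN
  have hP : ∀ k : ℕ, ∀ᶠ N in atTop,
      ((Dset k ∩ (Φ N : Set G)).ncard : ℝ) ≤ (1/(k+1)) * (Φ N).card ∧ 0 < (Φ N).card := by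
    intro k
    have hδ : (0:ℝ) < 1/(k+1)/2 := by positivity
    have h1 := aux_union_small hΦ (k+1) (fun _ => twoG G) (fun j => e j) (fun _ => hindex) hδ
    have h2 := aux_union_small hΦ (k+1) (fun _ => K) (fun j => e j) (fun _ => hKindex) hδ
    filter_upwards [h1, h2, hpos] with N hN1 hN2 hNpos
    refine ⟨?_, hNpos⟩
    have hsplit : Dset k ∩ (Φ N : Set G) =
        ((⋃ j : Fin (k+1), (e j +ᵥ (twoG G : Set G))) ∩ (Φ N : Set G))
        ∪ ((⋃ j : Fin (k+1), (e j +ᵥ (K : Set G))) ∩ (Φ N : Set G)) := by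
      rw [hDdef]
      rw [Set.union_inter_distrib_right]
    rw [hsplit]
    calc ((((⋃ j : Fin (k+1), (e j +ᵥ (twoG G : Set G))) ∩ (Φ N : Set G))
        ∪ ((⋃ j : Fin (k+1), (e j +ᵥ (K : Set G))) ∩ (Φ N : Set G))).ncard : ℝ)
        ≤ (((⋃ j : Fin (k+1), (e j +ᵥ (twoG G : Set G))) ∩ (Φ N : Set G)).ncard : ℝ)
          + (((⋃ j : Fin (k+1), (e j +ᵥ (K : Set G))) ∩ (Φ N : Set G)).ncard : ℝ) := by
          rw [← Nat.cast_add]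
          exact_mod_cast Set.ncard_union_le _ _
      _ ≤ (1/(k+1)/2) * (Φ N).card + (1/(k+1)/2) * (Φ N).card := add_le_add hN1 hN2
      _ = (1/(k+1)) * (Φ N).card := by ring
  -- choose the subsequence
  have hchoice : ∀ k : ℕ, ∃ N : ℕ, (((Dset k ∩ (Φ N : Set G)).ncard : ℝ)
      ≤ (1/(k+1)) * (Φ N).card ∧ 0 < (Φ N).card) ∧ k ≤ N := by
    intro k
    exact ((hP k).and (eventually_ge_atTop k)).exists
  choose Nf hNf1 hNf2 using hchoice
  set A : Set G := ⋃ k, ((Φ (Nf k) : Set G) \ Dset k) with hAdef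
  -- finiteness of A ∩ coset
  have hfin : ∀ (H : AddSubgroup G),
      (∀ (j k : ℕ), j ≤ k → (e j +ᵥ (H : Set G)) ⊆ Dset k) →
      ∀ x : G, (A ∩ (x +ᵥ (H : Set G))).Finite := by
    intro H hsub x
    obtain ⟨j, rfl⟩ := he x
    apply Set.Finite.subset (((Finset.range j).biUnion (fun k => Φ (Nf k))).finite_toSet)
    intro y hy
    obtain ⟨hyA, hyc⟩ := hy
    rw [hAdef, Set.mem_iUnion] at hyA
    obtain ⟨k, hyk, hyd⟩ := hyA
    simp only [Finset.coe_biUnion, Finset.coe_range, Set.mem_iUnion]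
    refine ⟨k, ?_, hyk⟩
    simp only [Set.mem_Iio]
    by_contra hc
    push_neg at hc
    exact hyd (hsub j k hc hyc)
  have hfin2G : ∀ x : G, (A ∩ (x +ᵥ (twoG G : Set G))).Finite := by
    apply hfin
    intro j k hjk y hy
    rw [hDdef]
    left
    rw [Set.mem_iUnion]
    exact ⟨⟨j, by omega⟩, hy⟩
  have hfinK : ∀ x : G, (A ∩ (x +ᵥ (K : Set G))).Finite := by
    apply hfin
    intro j k hjk y hy
    rw [hDdef]
    right
    rw [Set.mem_iUnion]
    exact ⟨⟨j, by omega⟩, hy⟩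
  refine ⟨A, ?_, ?_⟩
  · -- limsup = 1
    have hle1 : ∀ N, ((A ∩ (Φ N : Set G)).ncard : ℝ) / ((Φ N).card : ℝ) ≤ 1 := by
      intro N
      by_cases hc : ((Φ N).card : ℝ) = 0
      · rw [hc, div_zero]; norm_num
      · have hc' : (0:ℝ) < (Φ N).card := lt_of_le_of_ne (by positivity) (Ne.symm hc)
        rw [div_le_one hc']
        have : (A ∩ (Φ N : Set G)).ncard ≤ (Φ N).card := by
          rw [← Set.ncard_coe_finset (Φ N)]
          exact Set.ncard_le_ncard Set.inter_subset_right (Finset.finite_toSet _)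
        exact_mod_cast this
    have hbdd : IsBoundedUnder (· ≤ ·) atTop
        (fun N => ((A ∩ (Φ N : Set G)).ncard : ℝ) / ((Φ N).card : ℝ)) :=
      isBoundedUnder_of ⟨1, hle1⟩
    have hcobdd : IsCoboundedUnder (· ≤ ·) atTop
        (fun N => ((A ∩ (Φ N : Set G)).ncard : ℝ) / ((Φ N).card : ℝ)) :=
      isCoboundedUnder_le_of_le atTop
        (fun N => div_nonneg (Nat.cast_nonneg _) (Nat.cast_nonneg _))
    -- key lower bound along the subsequence
    have hlow : ∀ k : ℕ, 1 - 1/(k+1) ≤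
        ((A ∩ (Φ (Nf k) : Set G)).ncard : ℝ) / ((Φ (Nf k)).card : ℝ) := by
      intro k
      obtain ⟨hD, hposk⟩ := hNf1 k
      have hposk' : (0:ℝ) < (Φ (Nf k)).card := by exact_mod_cast hposk
      have hsub : (Φ (Nf k) : Set G) \ Dset k ⊆ A ∩ (Φ (Nf k) : Set G) := by
        intro y hy
        exact ⟨Set.mem_iUnion.mpr ⟨k, hy⟩, hy.1⟩
      have hcards : ((Φ (Nf k) : Set G) \ Dset k).ncard + (Dset k ∩ (Φ (Nf k) : Set G)).ncard
          = (Φ (Nf k)).card := by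
        rw [Set.inter_comm, add_comm,
          Set.ncard_inter_add_ncard_diff_eq_ncard _ _ (Finset.finite_toSet _),
          Set.ncard_coe_finset]
      have hmono : (((Φ (Nf k) : Set G) \ Dset k).ncard : ℝ)
          ≤ ((A ∩ (Φ (Nf k) : Set G)).ncard : ℝ) := by
        exact_mod_cast Set.ncard_le_ncard hsub
          (Set.Finite.subset (Finset.finite_toSet _) Set.inter_subset_right)
      have hcardsR : (((Φ (Nf k) : Set G) \ Dset k).ncard : ℝ)
          + ((Dset k ∩ (Φ (Nf k) : Set G)).ncard : ℝ) = (Φ (Nf k)).card := by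
        exact_mod_cast hcards
      rw [le_div_iff₀ hposk']
      nlinarith
    apply le_antisymm
    · exact limsup_le_of_le hcobdd (Eventually.of_forall hle1)
    · apply le_of_forall_pos_le_add
      intro ε hε
      obtain ⟨k0, hk0⟩ := exists_nat_ge (1/ε)
      have hk0' : 1/((k0:ℝ)+1) < ε := by
        rw [div_lt_iff₀ (by positivity)]
        rw [div_le_iff₀ hε] at hk0
        nlinarith
      have hfreq : ∃ᶠ N in atTop, 1 - ε ≤
          ((A ∩ (Φ N : Set G)).ncard : ℝ) / ((Φ N).card : ℝ) := by
        rw [frequently_atTop]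
        intro a
        refine ⟨Nf (max a k0), le_trans (le_max_left a k0) (hNf2 _), ?_⟩
        have h1 := hlow (max a k0)
        have h2 : 1/((max a k0 : ℕ) + 1 : ℝ) ≤ 1/((k0:ℝ)+1) := by
          apply div_le_div_of_nonneg_left (by norm_num) (by positivity)
          have : (k0:ℝ) ≤ (max a k0 : ℕ) := by exact_mod_cast le_max_right a k0
          linarith
        linarith
      have := le_limsup_of_frequently_le hfreq hbdd
      linarith
  · -- no t + B + B inside A
    intro t B hB hsubA
    by_cases hcase : ((fun b => b + b) '' B).Finite
    · -- some fiber is infinite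
      have hfiber : ∃ v : G, {b ∈ B | b + b = v}.Infinite := by
        by_contra hc
        push_neg at hc
        apply hB
        have : B ⊆ ⋃ v ∈ ((fun b => b + b) '' B), {b ∈ B | b + b = v} := by
          intro b hb
          rw [Set.mem_iUnion]
          exact ⟨b + b, Set.mem_iUnion.mpr ⟨⟨b, hb, rfl⟩, hb, rfl⟩⟩
        exact Set.Finite.subset (Set.Finite.biUnion hcase (fun v _ => hc v)) this
      obtain ⟨v, hv⟩ := hfiber
      obtain ⟨b0, hb0⟩ := hv.nonempty
      have hinj : Set.InjOn (fun b => t + b0 + b) {b ∈ B | b + b = v} :=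
        fun x _ y _ h => by simpa using h
      have himg : ((fun b => t + b0 + b) '' {b ∈ B | b + b = v}).Infinite := Set.Infinite.image hinj hv
      apply (hfinK (t + v)).not_infinite
      apply himg.mono ?_
      rintro - ⟨b, hb, rfl⟩
      constructor
      · apply hsubA
        exact Set.add_mem_add (Set.add_mem_add (Set.mem_singleton t) hb0.1) hb.1
      · rw [Set.mem_vadd_set_iff_neg_vadd_mem]
        simp only [vadd_eq_add]
        show -(t + v) + (t + b0 + b) ∈ K
        rw [hKdef, AddMonoidHom.mem_ker]
        show (-(t + v) + (t + b0 + b)) + (-(t + v) + (t + b0 + b)) = 0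
        have e1 : (-(t + v) + (t + b0 + b)) + (-(t + v) + (t + b0 + b))
            = (b0 + b0) + (b + b) + (-v + -v) := by abel
        rw [e1, hb0.2, hb.2]
        abel
    · -- the doubled image is infinite
      have hinj : Set.InjOn (fun y => t + y) ((fun b => b + b) '' B) :=
        fun x _ y _ h => by simpa using h
      have himg : ((fun y => t + y) '' ((fun b => b + b) '' B)).Infinite :=
        Set.Infinite.image hinj hcase
      apply (hfin2G t).not_infinite
      apply himg.mono ?_
      rintro - ⟨-, ⟨b, hb, rfl⟩, rfl⟩
      constructor
      · apply hsubA
        have hmem : (t + b) + b ∈ ({t} : Set G) + B + B :=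
          Set.add_mem_add (Set.add_mem_add (Set.mem_singleton t) hb) hb
        show t + (b + b) ∈ ({t} : Set G) + B + B
        have he2 : t + (b + b) = (t + b) + b := by abel
        rw [he2]
        exact hmem
      · rw [Set.mem_vadd_set_iff_neg_vadd_mem]
        simp only [vadd_eq_add]
        show -t + (t + (b + b)) ∈ twoG G
        have : -t + (t + (b + b)) = b + b := by abel
        rw [this]
        exact ⟨b, rfl⟩
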